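/- Let X be a finite set and let 𝒮 be a nonempty finite collection of subsets of X. Then there exists a partition of X into two disjoint subsets X' and X'' such that for every S ∈ 𝒮, both |S ∩ X'| ≤ |S|/2 + √(2·|S|·ln(2·|𝒮|)) and |S ∩ X''| ≤ |S|/2 + √(2·|S|·ln(2·|𝒮|)). -/

import Mathlib

open Finset Real

set_option linter.unusedSectionVars false

section Helpers
variable {α : Type*} [DecidableEq α]

lemma sum_pow_card (S : Finset α) (x : ℝ) :
    ∑ a ∈ S.powerset, x ^ a.card = (x + 1) ^ S.card := by
  simpa using Finset.sum_pow_mul_eq_add_pow x 1 S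

lemma tail_le (S : Finset α) (p : ℕ → Prop) [DecidablePred p] (g : ℕ → ℝ)
    (hg0 : ∀ k, 0 ≤ g k) (hg1 : ∀ k, p k → 1 ≤ g k) :
    (((S.powerset.filter fun a => p a.card)).card : ℝ) ≤ ∑ a ∈ S.powerset, g a.card := by
  rw [Finset.card_filter]
  push_cast
  refine Finset.sum_le_sum fun a _ => ?_
  by_cases h : p a.card
  · simp [h, hg1 _ h]
  · simp [h, hg0 _]

lemma geom_bound (n : ℕ) (l : ℝ) :
    (Real.exp l + 1) ^ n ≤ 2 ^ n * Real.exp (n * l / 2 + n * l ^ 2 / 8) := by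
  have h1 : Real.exp l + 1 = Real.exp (l / 2) * (2 * Real.cosh (l / 2)) := by
    rw [Real.cosh_eq, show (2:ℝ) * ((rexp (l/2) + rexp (-(l/2)))/2) = rexp (l/2) + rexp (-(l/2)) by ring,
      mul_add, ← Real.exp_add, ← Real.exp_add]
    norm_num
  have h2 : Real.cosh (l / 2) ≤ Real.exp (l ^ 2 / 8) := by
    have := Real.cosh_le_exp_half_sq (l / 2)
    rw [show l ^ 2 / 8 = (l/2) ^ 2 / 2 by ring]
    exact this
  have h3 : Real.exp l + 1 ≤ 2 * Real.exp (l / 2 + l ^ 2 / 8) := by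
    rw [h1, Real.exp_add]
    have he := Real.exp_pos (l / 2)
    nlinarith [Real.cosh_pos (x := l/2)]
  calc (Real.exp l + 1) ^ n ≤ (2 * Real.exp (l / 2 + l ^ 2 / 8)) ^ n := by
        apply pow_le_pow_left₀ (by positivity) h3
    _ = 2 ^ n * Real.exp (n * l / 2 + n * l ^ 2 / 8) := by
        rw [mul_pow, ← Real.exp_nat_mul]; ring_nf

open Classical in
lemma main_tail (S : Finset α) (hn : 1 ≤ S.card) (t : ℝ) (ht : 0 ≤ t) :
    ((S.powerset.filter fun a => ¬(((a.card : ℝ) ≤ (S.card : ℝ)/2 + t ∧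
        (((S \ a).card : ℝ) ≤ (S.card : ℝ)/2 + t)))).card : ℝ)
      ≤ 2 * 2 ^ S.card * Real.exp (-2 * t ^ 2 / S.card) := by
  set n := S.card with hn'
  have hnpos : (0:ℝ) < n := by exact_mod_cast hn
  set l : ℝ := 4 * t / n with hl'
  have hl : 0 ≤ l := by positivity
  -- upper tail
  have hup : ((S.powerset.filter fun a => ((n : ℝ)/2 + t < a.card)).card : ℝ)
      ≤ 2 ^ n * Real.exp (n * l ^ 2 / 8 - l * t) := by
    have := tail_le S (fun k => (n : ℝ)/2 + t < k)
      (fun k => Real.exp (l * k - l * ((n:ℝ)/2 + t)))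
      (fun k => (Real.exp_pos _).le)
      (fun k hk => Real.one_le_exp (by nlinarith))
    refine this.trans ?_
    have : ∀ a ∈ S.powerset, Real.exp (l * a.card - l * ((n:ℝ)/2 + t))
        = Real.exp (-(l * ((n:ℝ)/2 + t))) * (Real.exp l) ^ a.card := by
      intro a _
      rw [← Real.exp_nat_mul, ← Real.exp_add]; ring_nf
    rw [Finset.sum_congr rfl this, ← Finset.mul_sum, sum_pow_card]
    calc Real.exp (-(l * ((n:ℝ)/2 + t))) * (Real.exp l + 1) ^ n
        ≤ Real.exp (-(l * ((n:ℝ)/2 + t))) * (2 ^ n * Real.exp (n * l / 2 + n * l ^ 2 / 8)) := by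
          apply mul_le_mul_of_nonneg_left (geom_bound n l) (Real.exp_pos _).le
      _ = 2 ^ n * Real.exp (n * l ^ 2 / 8 - l * t) := by
          rw [mul_comm, mul_assoc, ← Real.exp_add]; ring_nf
  -- lower tail
  have hlo : ((S.powerset.filter fun a => ((a.card : ℝ) < (n : ℝ)/2 - t)).card : ℝ)
      ≤ 2 ^ n * Real.exp (n * l ^ 2 / 8 - l * t) := by
    have := tail_le S (fun k => (k : ℝ) < (n : ℝ)/2 - t)
      (fun k => Real.exp (l * ((n:ℝ)/2 - t) - l * k))
      (fun k => (Real.exp_pos _).le)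
      (fun k hk => Real.one_le_exp (by nlinarith))
    refine this.trans ?_
    have : ∀ a ∈ S.powerset, Real.exp (l * ((n:ℝ)/2 - t) - l * a.card)
        = Real.exp (l * ((n:ℝ)/2 - t)) * (Real.exp (-l)) ^ a.card := by
      intro a _
      rw [← Real.exp_nat_mul, ← Real.exp_add]; ring_nf
    rw [Finset.sum_congr rfl this, ← Finset.mul_sum, sum_pow_card]
    calc Real.exp (l * ((n:ℝ)/2 - t)) * (Real.exp (-l) + 1) ^ n
        ≤ Real.exp (l * ((n:ℝ)/2 - t)) * (2 ^ n * Real.exp (n * (-l) / 2 + n * (-l) ^ 2 / 8)) := by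
          apply mul_le_mul_of_nonneg_left (geom_bound n (-l)) (Real.exp_pos _).le
      _ = 2 ^ n * Real.exp (n * l ^ 2 / 8 - l * t) := by
          rw [mul_comm, mul_assoc, ← Real.exp_add]; ring_nf
  -- exponent value
  have hexp : n * l ^ 2 / 8 - l * t = -2 * t ^ 2 / n := by
    rw [hl']; field_simp [hl']
    ring
  -- subset inclusion
  have hsubfil : (S.powerset.filter fun a => ¬(((a.card : ℝ) ≤ (n : ℝ)/2 + t ∧
        (((S \ a).card : ℝ) ≤ (n : ℝ)/2 + t))))
      ⊆ (S.powerset.filter fun a => ((n : ℝ)/2 + t < a.card))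
        ∪ (S.powerset.filter fun a => ((a.card : ℝ) < (n : ℝ)/2 - t)) := by
    intro a ha
    simp only [Finset.mem_filter, Finset.mem_union, Finset.mem_powerset, not_and_or,
      not_le] at ha ⊢
    obtain ⟨haS, h⟩ := ha
    have hcard : ((S \ a).card : ℝ) = (n : ℝ) - a.card := by
      have := Finset.card_sdiff_add_card_eq_card haS
      rw [hn']
      push_cast [← this]
      ring
    rcases h with h | h
    · exact Or.inl ⟨haS, h⟩
    · refine Or.inr ⟨haS, ?_⟩
      rw [hcard] at h
      linarith
  calc ((S.powerset.filter fun a => ¬(((a.card : ℝ) ≤ (n : ℝ)/2 + t ∧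
        (((S \ a).card : ℝ) ≤ (n : ℝ)/2 + t)))).card : ℝ)
      ≤ (((S.powerset.filter fun a => ((n : ℝ)/2 + t < a.card))
        ∪ (S.powerset.filter fun a => ((a.card : ℝ) < (n : ℝ)/2 - t))).card : ℝ) := by
        exact_mod_cast Finset.card_le_card hsubfil
    _ ≤ ((S.powerset.filter fun a => ((n : ℝ)/2 + t < a.card)).card : ℝ)
        + ((S.powerset.filter fun a => ((a.card : ℝ) < (n : ℝ)/2 - t)).card : ℝ) := by
        exact_mod_cast Finset.card_union_le _ _
    _ ≤ 2 ^ n * Real.exp (n * l ^ 2 / 8 - l * t) + 2 ^ n * Real.exp (n * l ^ 2 / 8 - l * t) :=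
        add_le_add hup hlo
    _ = 2 * 2 ^ n * Real.exp (-2 * t ^ 2 / n) := by rw [hexp]; ring

open Classical in
lemma badX_bound (X S : Finset α) (hS : S ⊆ X) (hn : 1 ≤ S.card) (t : ℝ) (ht : 0 ≤ t) :
    ((X.powerset.filter fun c => ¬((((S ∩ c).card : ℝ) ≤ (S.card : ℝ)/2 + t ∧
        (((S \ c).card : ℝ) ≤ (S.card : ℝ)/2 + t)))).card : ℝ)
      ≤ 2 ^ (X \ S).card * (2 * 2 ^ S.card * Real.exp (-2 * t ^ 2 / S.card)) := by
  have key : (X.powerset.filter fun c => ¬((((S ∩ c).card : ℝ) ≤ (S.card : ℝ)/2 + t ∧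
        (((S \ c).card : ℝ) ≤ (S.card : ℝ)/2 + t)))).card
      ≤ 2 ^ (X \ S).card * (S.powerset.filter fun a => ¬(((a.card : ℝ) ≤ (S.card : ℝ)/2 + t ∧
        (((S \ a).card : ℝ) ≤ (S.card : ℝ)/2 + t)))).card := by
    apply Finset.card_le_mul_card_image_of_maps_to (f := fun c => S ∩ c)
    · intro c hc
      simp only [Finset.mem_filter, Finset.mem_powerset] at hc ⊢
      refine ⟨Finset.inter_subset_left, ?_⟩
      rw [Finset.sdiff_inter_self_left]
      simpa using hc.2
    · intro b _
      refine le_trans (Finset.card_le_card_of_injOn (fun c => c \ S) ?_ ?_)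
        (le_of_eq (Finset.card_powerset _))
      · intro c hc
        simp only [Finset.mem_coe, Finset.mem_filter, Finset.mem_powerset] at hc ⊢
        exact Finset.sdiff_subset_sdiff hc.1.1 le_rfl
      · intro c1 h1 c2 h2 he
        simp only at he
        simp only [Finset.coe_filter, Set.mem_setOf_eq] at h1 h2
        have e1 : S ∩ c1 = S ∩ c2 := h1.2.trans h2.2.symm
        ext x
        by_cases hx : x ∈ S
        · constructor <;> intro hxc
          · have : x ∈ S ∩ c2 := e1 ▸ (Finset.mem_inter.mpr ⟨hx, hxc⟩)
            exact (Finset.mem_inter.mp this).2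
          · have : x ∈ S ∩ c1 := e1.symm ▸ (Finset.mem_inter.mpr ⟨hx, hxc⟩)
            exact (Finset.mem_inter.mp this).2
        · constructor <;> intro hxc
          · have : x ∈ c1 \ S := Finset.mem_sdiff.mpr ⟨hxc, hx⟩
            rw [he] at this
            exact (Finset.mem_sdiff.mp this).1
          · have : x ∈ c2 \ S := Finset.mem_sdiff.mpr ⟨hxc, hx⟩
            rw [← he] at this
            exact (Finset.mem_sdiff.mp this).1
  calc ((X.powerset.filter fun c => ¬((((S ∩ c).card : ℝ) ≤ (S.card : ℝ)/2 + t ∧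
        (((S \ c).card : ℝ) ≤ (S.card : ℝ)/2 + t)))).card : ℝ)
      ≤ 2 ^ (X \ S).card * ((S.powerset.filter fun a => ¬(((a.card : ℝ) ≤ (S.card : ℝ)/2 + t ∧
        (((S \ a).card : ℝ) ≤ (S.card : ℝ)/2 + t)))).card : ℝ) := by exact_mod_cast key
    _ ≤ 2 ^ (X \ S).card * (2 * 2 ^ S.card * Real.exp (-2 * t ^ 2 / S.card)) := by
        apply mul_le_mul_of_nonneg_left (main_tail S hn t ht) (by positivity)

end Helpers

theorem stmt_2 {α : Type*} [DecidableEq α] (X : Finset α) (𝒮 : Finset (Finset α))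
    (hne : 𝒮.Nonempty) (hsub : ∀ S ∈ 𝒮, S ⊆ X) :
    ∃ X' X'' : Finset α, X' ∪ X'' = X ∧ Disjoint X' X'' ∧
      ∀ S ∈ 𝒮,
        ((S ∩ X').card : ℝ) ≤ (S.card : ℝ) / 2 +
            Real.sqrt (2 * (S.card : ℝ) * Real.log (2 * (𝒮.card : ℝ))) ∧
        ((S ∩ X'').card : ℝ) ≤ (S.card : ℝ) / 2 +
            Real.sqrt (2 * (S.card : ℝ) * Real.log (2 * (𝒮.card : ℝ))) := by
  classical
  set m := 𝒮.card with hm'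
  have hm1 : 1 ≤ m := Finset.card_pos.mpr hne
  have hmR : (1:ℝ) ≤ m := by exact_mod_cast hm1
  set L : ℝ := Real.log (2 * (m : ℝ)) with hL'
  have hL2 : Real.log 2 ≤ L := Real.log_le_log (by norm_num) (by linarith)
  have hL0 : 0 < L := lt_of_lt_of_le (Real.log_pos (by norm_num)) hL2
  set t : Finset α → ℝ := fun S => Real.sqrt (2 * (S.card : ℝ) * L) with ht'
  have ht0 : ∀ S, 0 ≤ t S := fun S => Real.sqrt_nonneg _
  set good : Finset α → Finset α → Prop := fun S c =>
    (((S ∩ c).card : ℝ) ≤ (S.card : ℝ)/2 + t S ∧ ((S \ c).card : ℝ) ≤ (S.card : ℝ)/2 + t S)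
    with hgood'
  have hBB : ∀ S ∈ 𝒮, ((X.powerset.filter fun c => ¬ good S c).card : ℝ)
      ≤ 2 ^ X.card * 2 * (((2 * (m:ℝ)) ^ 4)⁻¹) := by
    intro S hS
    by_cases hn : 1 ≤ S.card
    · have hnR : (1:ℝ) ≤ S.card := by exact_mod_cast hn
      have hb := badX_bound X S (hsub S hS) hn (t S) (ht0 S)
      have hexp : Real.exp (-2 * (t S) ^ 2 / S.card) = ((2 * (m:ℝ)) ^ 4)⁻¹ := by
        have hsq : (t S) ^ 2 = 2 * (S.card : ℝ) * L :=
          Real.sq_sqrt (by positivity)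
        have h4 : -2 * (t S) ^ 2 / S.card = -(4 * L) := by
          rw [hsq]; field_simp; ring
        rw [h4, Real.exp_neg, show (4:ℝ) * L = (4:ℕ) * L by norm_num,
          Real.exp_nat_mul, Real.exp_log (by linarith)]
      have hcards : (X \ S).card + S.card = X.card :=
        Finset.card_sdiff_add_card_eq_card (hsub S hS)
      have hpow : (2:ℝ) ^ (X \ S).card * 2 ^ S.card = 2 ^ X.card := by
        rw [← pow_add, hcards]
      calc ((X.powerset.filter fun c => ¬ good S c).card : ℝ)
          ≤ 2 ^ (X \ S).card * (2 * 2 ^ S.card * Real.exp (-2 * (t S) ^ 2 / S.card)) := hb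
        _ = 2 ^ X.card * 2 * (((2 * (m:ℝ)) ^ 4)⁻¹) := by rw [hexp, ← hpow]; ring
    · have hS0 : S.card = 0 := by omega
      have hSe : S = ∅ := Finset.card_eq_zero.mp hS0
      have : (X.powerset.filter fun c => ¬ good S c) = ∅ := by
        apply Finset.filter_false_of_mem
        intro c _
        simp only [hgood', hSe, Finset.empty_inter, Finset.empty_sdiff, Finset.card_empty,
          Nat.cast_zero, not_not]
        constructor <;> · have := ht0 ∅; linarith
      rw [this]
      simp only [Finset.card_empty, Nat.cast_zero]
      positivity
  -- union bound
  set Bad := X.powerset.filter (fun c => ∃ S ∈ 𝒮, ¬ good S c) with hBad'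
  have hsubB : Bad ⊆ 𝒮.biUnion (fun S => X.powerset.filter fun c => ¬ good S c) := by
    intro c hc
    simp only [hBad', Finset.mem_filter, Finset.mem_biUnion] at hc ⊢
    obtain ⟨hcX, S, hS, hgS⟩ := hc
    exact ⟨S, hS, hcX, hgS⟩
  have hBadlt : (Bad.card : ℝ) < 2 ^ X.card := by
    calc (Bad.card : ℝ)
        ≤ ((𝒮.biUnion (fun S => X.powerset.filter fun c => ¬ good S c)).card : ℝ) := by
          exact_mod_cast Finset.card_le_card hsubB
      _ ≤ ∑ S ∈ 𝒮, ((X.powerset.filter fun c => ¬ good S c).card : ℝ) := by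
          exact_mod_cast Finset.card_biUnion_le
      _ ≤ ∑ _S ∈ 𝒮, (2 ^ X.card * 2 * (((2 * (m:ℝ)) ^ 4)⁻¹)) := Finset.sum_le_sum hBB
      _ = m * (2 ^ X.card * 2 * (((2 * (m:ℝ)) ^ 4)⁻¹)) := by
          rw [Finset.sum_const, hm']; simp [mul_comm]
      _ < 2 ^ X.card := by
          have hu : (2:ℝ) ≤ 2 * m := by linarith
          have hup : (0:ℝ) < 2 * m := by linarith
          have hP : (0:ℝ) < (2:ℝ) ^ X.card := by positivity
          rw [show (m:ℝ) * (2 ^ X.card * 2 * (((2 * (m:ℝ)) ^ 4)⁻¹))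
            = 2 ^ X.card * ((2 * m) * ((2 * (m:ℝ)) ^ 4)⁻¹) by ring]
          have key : ∀ u : ℝ, 2 ≤ u → u < u ^ 4 := by
            intro u h
            nlinarith [sq_nonneg u, sq_nonneg (u - 1), sq_nonneg (u * u - 1)]
          have : (2 * (m:ℝ)) * ((2 * (m:ℝ)) ^ 4)⁻¹ < 1 := by
            rw [mul_inv_lt_iff₀ (by positivity), one_mul]
            exact key _ hu
          nlinarith
  -- extract a good coloring
  have hex : ∃ c ∈ X.powerset, ∀ S ∈ 𝒮, good S c := by
    by_contra h
    push_neg at h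
    have : Bad = X.powerset := by
      apply Finset.filter_true_of_mem
      intro c hc
      obtain ⟨S, hS, hgS⟩ := h c hc
      exact ⟨S, hS, hgS⟩
    rw [this, Finset.card_powerset] at hBadlt
    simp at hBadlt
  obtain ⟨c, hcX, hcg⟩ := hex
  rw [Finset.mem_powerset] at hcX
  refine ⟨c, X \ c, Finset.union_sdiff_of_subset hcX, Finset.disjoint_sdiff, ?_⟩
  intro S hS
  have h1 := (hcg S hS).1
  have h2 := (hcg S hS).2
  have hSX : S ∩ X = S := Finset.inter_eq_left.mpr (hsub S hS)
  have hsd : S ∩ (X \ c) = S \ c := by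
    rw [← Finset.inter_sdiff_assoc, hSX]
  rw [hsd]
  exact ⟨h1, h2⟩
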